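/- Let G be a group acting minimally by homeomorphisms on a compact Hausdorff space Z. Suppose some element g ∈ G acts on Z with north-south dynamics with respect to two fixed points x, y ∈ Z (i.e., for any open neighborhoods U of x and V of y there is m ∈ ℕ with g^m(Z \ V) ⊆ U and g^{-m}(Z \ U) ⊆ V). Then the action is a strong boundary action: for every compact set F ⊊ Z and every non-empty open set O there exists h ∈ G with hF ⊆ O. -/

import Mathlib

/-- **Strong boundary action from minimality and north-south dynamics.**
If a group `G` acts minimally by homeomorphisms on a compact Hausdorff space `Z`
and some `g ∈ G` has north-south dynamics with respect to fixed points `x, y`,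
then the action is a strong boundary action. -/
theorem minimal_northSouth_strongBoundary {G Z : Type*} [Group G] [TopologicalSpace Z]
    [CompactSpace Z] [T2Space Z] [MulAction G Z]
    (hcont : ∀ g : G, Continuous (fun z : Z => g • z))
    (hmin : ∀ z : Z, Dense (MulAction.orbit G z : Set Z))
    (g : G) (x y : Z) (hfx : g • x = x) (hfy : g • y = y)
    (hNS : ∀ U V : Set Z, IsOpen U → IsOpen V → x ∈ U → y ∈ V →
      ∃ m : ℕ, (fun z : Z => g ^ m • z) '' Vᶜ ⊆ U ∧ (fun z : Z => (g ^ m)⁻¹ • z) '' Uᶜ ⊆ V) :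
    ∀ F : Set Z, IsCompact F → F ≠ Set.univ → ∀ O : Set Z, IsOpen O → O.Nonempty →
      ∃ h : G, (fun z : Z => h • z) '' F ⊆ O := by
  intro F hF hFne O hO hOne
  -- find b with b • x ∈ O
  obtain ⟨w, hbO, hw⟩ := (hmin x).inter_open_nonempty O hO hOne
  obtain ⟨b, rfl⟩ := MulAction.mem_orbit_iff.mp hw
  -- Fᶜ is open and nonempty
  have hFc : IsOpen Fᶜ := hF.isClosed.isOpen_compl
  have hFcne : Fᶜ.Nonempty := by
    rw [Set.nonempty_compl]; exact hFne
  -- find c with c • y ∉ F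
  obtain ⟨w', hcF, hw'⟩ := (hmin y).inter_open_nonempty Fᶜ hFc hFcne
  obtain ⟨c, rfl⟩ := MulAction.mem_orbit_iff.mp hw'
  set K : Set Z := (fun z : Z => c⁻¹ • z) '' F with hK
  have hKcomp : IsCompact K := hF.image (hcont c⁻¹)
  have hyK : y ∉ K := by
    rintro ⟨z, hz, hzy⟩
    apply hcF
    simp only at hzy
    rw [← hzy, smul_inv_smul]
    exact hz
  set U : Set Z := (fun z : Z => b • z) ⁻¹' O with hU
  have hUo : IsOpen U := hO.preimage (hcont b)
  have hxU : x ∈ U := hbO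
  obtain ⟨m, h1, -⟩ := hNS U Kᶜ hUo hKcomp.isClosed.isOpen_compl hxU hyK
  refine ⟨b * g ^ m * c⁻¹, ?_⟩
  rintro _ ⟨z, hz, rfl⟩
  have hzK : c⁻¹ • z ∈ K := ⟨z, hz, rfl⟩
  have := h1 ⟨c⁻¹ • z, by simpa using hzK, rfl⟩
  simpa [mul_smul, hU] using this
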